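/- arXiv:1812.08866 — 2 statements merged into one kernel-verified Lean document; each statement's English description precedes it below -/
import Mathlib

section
/- Let a, b be real numbers with 0 < a ≤ b. Then the function Z ↦ log₂(1 + bZ) − log₂(1 + aZ) is concave on the interval [0, ∞). -/
open Set

lemma aux_pos {c x : ℝ} (hc : 0 < c) (hx : 0 ≤ x) : 0 < 1 + c * x := by
  nlinarith

lemma aux_deriv1 {c x : ℝ} (hc : 0 < c) (hx : 0 ≤ x) :
    HasDerivAt (fun Z => Real.log (1 + c * Z)) (c / (1 + c * x)) x := by
  have h1 : HasDerivAt (fun Z : ℝ => 1 + c * Z) c x := by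
    simpa using ((hasDerivAt_id x).const_mul c).const_add 1
  simpa [div_eq_mul_inv, mul_comm] using h1.log (aux_pos hc hx).ne'

lemma aux_deriv2 {c x : ℝ} (hc : 0 < c) (hx : 0 ≤ x) :
    HasDerivAt (fun Z => c / (1 + c * Z)) (-(c ^ 2 / (1 + c * x) ^ 2)) x := by
  have h1 : HasDerivAt (fun Z : ℝ => 1 + c * Z) c x := by
    simpa using ((hasDerivAt_id x).const_mul c).const_add 1
  have h2 := (h1.inv (aux_pos hc hx).ne').const_mul c
  simpa [div_eq_mul_inv, pow_two, mul_comm, mul_left_comm, mul_assoc, neg_mul,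
    mul_neg] using h2
  
/-- Core of Theorem 1: for `0 < a ≤ b`, the function
`Z ↦ log₂(1 + bZ) − log₂(1 + aZ)` is concave on `[0, ∞)`. -/
theorem stmt_2 (a b : ℝ) (ha : 0 < a) (hab : a ≤ b) :
    ConcaveOn ℝ (Set.Ici (0 : ℝ))
      (fun Z => Real.logb 2 (1 + b * Z) - Real.logb 2 (1 + a * Z)) := by
  have hb : 0 < b := ha.trans_le hab
  have hlog2 : 0 < Real.log 2 := Real.log_pos (by norm_num)
  have key : ConcaveOn ℝ (Set.Ici (0 : ℝ))
      (fun Z => (Real.log (1 + b * Z) - Real.log (1 + a * Z)) / Real.log 2) := by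
    apply concaveOn_of_hasDerivWithinAt2_nonpos (f' := fun x =>
        (b / (1 + b * x) - a / (1 + a * x)) / Real.log 2)
      (f'' := fun x =>
        (-(b ^ 2 / (1 + b * x) ^ 2) + a ^ 2 / (1 + a * x) ^ 2) / Real.log 2)
      (convex_Ici 0)
    · apply ContinuousOn.div_const
      apply ContinuousOn.sub
      · exact ((continuous_const.add (continuous_const.mul continuous_id)).continuousOn).log
          (fun x hx => (aux_pos hb hx).ne')
      · exact ((continuous_const.add (continuous_const.mul continuous_id)).continuousOn).log
          (fun x hx => (aux_pos ha hx).ne')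
    · intro x hx
      rw [interior_Ici] at hx
      exact (((aux_deriv1 hb (le_of_lt hx)).sub
        (aux_deriv1 ha (le_of_lt hx))).div_const _).hasDerivWithinAt
    · intro x hx
      rw [interior_Ici] at hx
      have h1 := aux_deriv2 hb (le_of_lt hx)
      have h2 := aux_deriv2 ha (le_of_lt hx)
      exact ((h1.sub h2).div_const _).hasDerivWithinAt.congr_deriv (by ring)
    · intro x hx
      rw [interior_Ici] at hx
      have hx' : (0:ℝ) ≤ x := le_of_lt hx
      have hpa := aux_pos ha hx'
      have hpb := aux_pos hb hx'
      apply div_nonpos_of_nonpos_of_nonneg _ hlog2.le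
      have h : a / (1 + a * x) ≤ b / (1 + b * x) := by
        rw [div_le_div_iff₀ hpa hpb]
        nlinarith
      have h2 : (a / (1 + a * x)) ^ 2 ≤ (b / (1 + b * x)) ^ 2 := by
        apply pow_le_pow_left₀ (by positivity) h
      rw [div_pow, div_pow] at h2
      linarith
  convert key using 2 with Z
  rw [Real.logb, Real.logb, sub_div]
end

section
/- Let n ≥ 1 and let λ : Fin n → ℝ satisfy 0 < λ 1 ≤ λ 2 ≤ ... ≤ λ n. Define F : (Fin n → ℝ) → ℝ by F(Z) = log₂(1 + λ₁ Z₁) + Σ_{j=2}^{n} [log₂(1 + λ_j Z_j) − log₂(1 + λ_{j−1} Z_j)]. Then F is concave on the convex set {Z : Z_j ≥ 0 for all j}. (Theorem 1: the objective of problem P5 is concave, so P5—whose constraints are linear—is a convex optimization problem.) -/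
open Real Set

private lemma hasDerivAt_logterm (a z : ℝ) (hne : (1 : ℝ) + a * z ≠ 0) :
    HasDerivAt (fun z => Real.log (1 + a * z)) (a / (1 + a * z)) z := by
  have h1 : HasDerivAt (fun z : ℝ => 1 + a * z) a z := by
    simpa using ((hasDerivAt_id z).const_mul a).const_add (1 : ℝ)
  have := (Real.hasDerivAt_log hne).comp z h1
  simpa [div_eq_inv_mul, Function.comp_def] using this

private lemma key_concave {a b : ℝ} (hb : 0 ≤ b) (hba : b ≤ a) :
    ConcaveOn ℝ (Set.Ici (0:ℝ))
      (fun z => Real.log (1 + a * z) - Real.log (1 + b * z)) := by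
  have ha : 0 ≤ a := hb.trans hba
  have hposA : ∀ z : ℝ, 0 ≤ z → (0:ℝ) < 1 + a * z := fun z hz => by nlinarith
  have hposB : ∀ z : ℝ, 0 ≤ z → (0:ℝ) < 1 + b * z := fun z hz => by nlinarith
  have hderiv : ∀ z ∈ interior (Set.Ici (0:ℝ)),
      deriv (fun z => Real.log (1 + a * z) - Real.log (1 + b * z)) z
        = a / (1 + a * z) - b / (1 + b * z) := by
    intro z hz
    rw [interior_Ici] at hz
    have hz' : (0:ℝ) ≤ z := le_of_lt hz
    exact ((hasDerivAt_logterm a z (hposA z hz').ne').sub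
      (hasDerivAt_logterm b z (hposB z hz').ne')).deriv
  refine AntitoneOn.concaveOn_of_deriv (convex_Ici 0) ?_ ?_ ?_
  · refine ContinuousOn.sub ?_ ?_ <;>
    · refine ContinuousOn.log (by fun_prop) ?_
      intro z hz
      first
        | exact (hposA z hz).ne'
        | exact (hposB z hz).ne'
  · intro z hz
    rw [interior_Ici] at hz
    have hz' : (0:ℝ) ≤ z := le_of_lt hz
    exact (((hasDerivAt_logterm a z (hposA z hz').ne').sub
      (hasDerivAt_logterm b z (hposB z hz').ne')).differentiableAt).differentiableWithinAt
  · intro x hx y hy hxy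
    rw [hderiv x hx, hderiv y hy]
    rw [interior_Ici] at hx hy
    have hx' : (0:ℝ) ≤ x := le_of_lt hx
    have hy' : (0:ℝ) ≤ y := le_of_lt hy
    have hax := hposA x hx'; have hbx := hposB x hx'
    have hay := hposA y hy'; have hby := hposB y hy'
    rw [div_sub_div _ _ hay.ne' hby.ne', div_sub_div _ _ hax.ne' hbx.ne',
      div_le_div_iff₀ (by positivity) (by positivity)]
    nlinarith [mul_nonneg (mul_nonneg (sub_nonneg.2 hba) (add_nonneg ha hb)) (sub_nonneg.2 hxy),
      mul_nonneg (mul_nonneg (mul_nonneg (sub_nonneg.2 hba) (mul_nonneg ha hb))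
        (sub_nonneg.2 hxy)) (add_nonneg hx' hy')]

private lemma key_concave_logb {a b : ℝ} (hb : 0 ≤ b) (hba : b ≤ a) :
    ConcaveOn ℝ (Set.Ici (0:ℝ))
      (fun z => Real.logb 2 (1 + a * z) - Real.logb 2 (1 + b * z)) := by
  have h := (key_concave hb hba).smul (c := (Real.log 2)⁻¹) (by positivity)
  simpa [Real.logb, smul_eq_mul, div_eq_inv_mul, mul_sub] using h

private lemma convex_S (n : ℕ) :
    Convex ℝ {Z : ℕ → ℝ | ∀ j : ℕ, 1 ≤ j → j ≤ n → 0 ≤ Z j} := by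
  intro x hx y hy s t hs ht hst
  intro j h1 h2
  have := hx j h1 h2
  have := hy j h1 h2
  simp only [Pi.add_apply, Pi.smul_apply, smul_eq_mul]
  positivity

private lemma coord_concave {n j : ℕ} (h1 : 1 ≤ j) (h2 : j ≤ n) {g : ℝ → ℝ}
    (hg : ConcaveOn ℝ (Set.Ici (0:ℝ)) g) :
    ConcaveOn ℝ {Z : ℕ → ℝ | ∀ j : ℕ, 1 ≤ j → j ≤ n → 0 ≤ Z j}
      (fun Z => g (Z j)) := by
  refine ⟨convex_S n, fun x hx y hy s t hs ht hst => ?_⟩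
  have := hg.2 (hx j h1 h2) (hy j h1 h2) hs ht hst
  simpa [smul_eq_mul] using this

private lemma sum_concave {s : Set (ℕ → ℝ)} (hs : Convex ℝ s) (t : Finset ℕ)
    (f : ℕ → (ℕ → ℝ) → ℝ) (h : ∀ j ∈ t, ConcaveOn ℝ s (f j)) :
    ConcaveOn ℝ s (fun Z => ∑ j ∈ t, f j Z) := by
  classical
  induction t using Finset.induction_on with
  | empty => simpa using concaveOn_const 0 hs
  | @insert a tt hj ih =>
    have h1 := h a (Finset.mem_insert_self a tt)
    have h2 := ih (fun j hjm => h j (Finset.mem_insert_of_mem hjm))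
    have := h1.add h2
    simpa [Finset.sum_insert hj, Pi.add_def] using this

/-- Theorem 1 (concavity of the objective of P5): with channel gains
`0 < λ 1 ≤ λ 2 ≤ ... ≤ λ n` (users indexed `1, ..., n`), the function
`F(Z) = log₂(1 + λ 1 * Z 1) + Σ_{j=2}^{n} [log₂(1 + λ j * Z j) − log₂(1 + λ (j−1) * Z j)]`
is concave on the convex set `{Z : Z j ≥ 0 for all j ∈ {1, ..., n}}`. -/
theorem stmt_4 (n : ℕ) (hn : 1 ≤ n) (lam : ℕ → ℝ)
    (hpos : 0 < lam 1)
    (hmono : ∀ j : ℕ, 2 ≤ j → j ≤ n → lam (j - 1) ≤ lam j) :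
    ConcaveOn ℝ {Z : ℕ → ℝ | ∀ j : ℕ, 1 ≤ j → j ≤ n → 0 ≤ Z j}
      (fun Z => Real.logb 2 (1 + lam 1 * Z 1)
        + ∑ j ∈ Finset.Icc 2 n,
            (Real.logb 2 (1 + lam j * Z j) - Real.logb 2 (1 + lam (j - 1) * Z j))) := by
  -- positivity of lam on [1, n]
  have hlam : ∀ k : ℕ, 1 ≤ k → k ≤ n → 0 < lam k := by
    intro k hk
    induction k with
    | zero => omega
    | succ m ih =>
      intro hkn
      rcases Nat.eq_or_lt_of_le hk with h | h
      · rw [← h]; exact hpos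
      · have hm1 : 1 ≤ m := by omega
        have := hmono (m + 1) (by omega) hkn
        have := ih hm1 (by omega)
        simpa using lt_of_lt_of_le ‹0 < lam m› (by simpa using hmono (m+1) (by omega) hkn)
  -- first term
  have hfirst : ConcaveOn ℝ {Z : ℕ → ℝ | ∀ j : ℕ, 1 ≤ j → j ≤ n → 0 ≤ Z j}
      (fun Z => Real.logb 2 (1 + lam 1 * Z 1)) := by
    have h := coord_concave (n := n) (j := 1) le_rfl hn
      (key_concave_logb (a := lam 1) (b := 0) le_rfl hpos.le)
    simpa using h
  -- sum term
  have hsum : ConcaveOn ℝ {Z : ℕ → ℝ | ∀ j : ℕ, 1 ≤ j → j ≤ n → 0 ≤ Z j}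
      (fun Z => ∑ j ∈ Finset.Icc 2 n,
          (Real.logb 2 (1 + lam j * Z j) - Real.logb 2 (1 + lam (j - 1) * Z j))) := by
    refine sum_concave (convex_S n) _ _ ?_
    intro j hj
    rw [Finset.mem_Icc] at hj
    have hbpos : 0 < lam (j - 1) := hlam (j - 1) (by omega) (by omega)
    exact coord_concave (by omega) hj.2
      (key_concave_logb hbpos.le (hmono j hj.1 hj.2))
  have := hfirst.add hsum
  simpa [Pi.add_def] using this
end
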